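/- Let Q_k = {x ∈ ℝ^k : x_1 ≥ 0, …, x_k ≥ 0} be the closed first quadrant in ℝ^k and let n ∈ ℤ. Then the function n·𝟏_{Q_k} : ℝ^k → ℤ (equal to n on Q_k and 0 elsewhere) is a sum of signs if and only if 2^k divides n. -/

import Mathlib

/-- The integer-valued sign of a real number. -/
noncomputable def sgn (r : ℝ) : ℤ := if r < 0 then -1 else if 0 < r then 1 else 0

/-- A function `φ : ℝ^n → ℤ` is a sum of signs if it is a finite sum of signs of
polynomials. -/
def IsSumOfSigns {n : ℕ} (φ : (Fin n → ℝ) → ℤ) : Prop :=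
  ∃ (s : ℕ) (g : Fin s → MvPolynomial (Fin n) ℝ),
    ∀ x, φ x = ∑ i : Fin s, sgn (MvPolynomial.eval x (g i))

lemma sgn_eq_sign (r : ℝ) : sgn r = (SignType.sign r : ℤ) := by
  unfold sgn
  rcases lt_trichotomy r 0 with h|h|h
  · simp [sign_apply, h, asymm h]
  · simp [sign_apply, h]
  · simp [sign_apply, h, asymm h]

lemma sgn_mul (a b : ℝ) : sgn (a * b) = sgn a * sgn b := by
  simp [sgn_eq_sign, sign_mul]

lemma sgn_zero : sgn 0 = 0 := by simp [sgn]

lemma sgn_one : sgn 1 = 1 := by norm_num [sgn]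

lemma sgn_neg (a : ℝ) : sgn (-a) = - sgn a := by
  rcases lt_trichotomy a 0 with h|h|h
  · simp [sgn, h, asymm h, neg_pos.2 h, not_lt.2 (neg_pos.2 h).le]
  · simp [sgn, h]
  · simp [sgn, h, asymm h, neg_neg_iff_pos.2 h, not_lt.2 h.le]

lemma sgn_of_pos {a : ℝ} (h : 0 < a) : sgn a = 1 := by simp [sgn, h, asymm h]

lemma sgn_of_neg {a : ℝ} (h : a < 0) : sgn a = -1 := by simp [sgn, h]

lemma sgn_pos_mul {c a : ℝ} (h : 0 < c) : sgn (c * a) = sgn a := by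
  rw [sgn_mul, sgn_of_pos h, one_mul]

lemma sgn_sq (a : ℝ) : sgn (a ^ 2) = if a = 0 then 0 else 1 := by
  rcases eq_or_ne a 0 with h|h
  · simp [h, sgn_zero]
  · simp [h, sgn_of_pos (by positivity : (0:ℝ) < a ^ 2)]

section SOS
open MvPolynomial

noncomputable def sgnSum {n : ℕ} (l : List (MvPolynomial (Fin n) ℝ)) (x : Fin n → ℝ) : ℤ :=
  (l.map fun g => sgn (eval x g)).sum

lemma isSumOfSigns_iff_list {n : ℕ} (φ : (Fin n → ℝ) → ℤ) :
    IsSumOfSigns φ ↔ ∃ l : List (MvPolynomial (Fin n) ℝ), ∀ x, φ x = sgnSum l x := by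
  constructor
  · rintro ⟨s, g, h⟩
    refine ⟨List.ofFn g, fun x => ?_⟩
    rw [h x, sgnSum, List.map_ofFn, List.sum_ofFn]
    rfl
  · rintro ⟨l, h⟩
    refine ⟨l.length, l.get, fun x => ?_⟩
    rw [h x, sgnSum]
    conv_lhs => rw [← List.ofFn_get l]
    rw [List.map_ofFn, List.sum_ofFn]
    rfl

lemma sgnSum_append {n : ℕ} (l l' : List (MvPolynomial (Fin n) ℝ)) (x : Fin n → ℝ) :
    sgnSum (l ++ l') x = sgnSum l x + sgnSum l' x := by
  simp [sgnSum]

lemma isSOS_congr {n : ℕ} {φ ψ : (Fin n → ℝ) → ℤ} (h : ∀ x, φ x = ψ x)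
    (hψ : IsSumOfSigns ψ) : IsSumOfSigns φ := by
  obtain ⟨s, g, hg⟩ := hψ
  exact ⟨s, g, fun x => (h x).trans (hg x)⟩

lemma isSOS_sgn {n : ℕ} (g : MvPolynomial (Fin n) ℝ) :
    IsSumOfSigns (fun x => sgn (eval x g)) := by
  rw [isSumOfSigns_iff_list]
  exact ⟨[g], fun x => by simp [sgnSum]⟩

lemma isSOS_zero {n : ℕ} : IsSumOfSigns (fun _ : Fin n → ℝ => (0 : ℤ)) := by
  rw [isSumOfSigns_iff_list]; exact ⟨[], fun x => by simp [sgnSum]⟩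

lemma isSOS_add {n : ℕ} {φ ψ : (Fin n → ℝ) → ℤ} (hφ : IsSumOfSigns φ)
    (hψ : IsSumOfSigns ψ) : IsSumOfSigns (fun x => φ x + ψ x) := by
  rw [isSumOfSigns_iff_list] at *
  obtain ⟨l, hl⟩ := hφ; obtain ⟨l', hl'⟩ := hψ
  exact ⟨l ++ l', fun x => by rw [sgnSum_append, hl, hl']⟩

lemma sgnSum_map_neg {n : ℕ} (l : List (MvPolynomial (Fin n) ℝ)) (x : Fin n → ℝ) :
    sgnSum (l.map (fun g => -g)) x = - sgnSum l x := by
  induction l with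
  | nil => simp [sgnSum]
  | cons a t ih =>
      simp only [sgnSum, List.map_cons, List.sum_cons] at *
      rw [map_neg, sgn_neg, ih]
      ring

lemma isSOS_neg {n : ℕ} {φ : (Fin n → ℝ) → ℤ} (hφ : IsSumOfSigns φ) :
    IsSumOfSigns (fun x => - φ x) := by
  rw [isSumOfSigns_iff_list] at *
  obtain ⟨l, hl⟩ := hφ
  exact ⟨l.map (fun g => -g), fun x => by rw [hl, sgnSum_map_neg]⟩

lemma isSOS_sub {n : ℕ} {φ ψ : (Fin n → ℝ) → ℤ} (hφ : IsSumOfSigns φ)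
    (hψ : IsSumOfSigns ψ) : IsSumOfSigns (fun x => φ x - ψ x) := by
  have := isSOS_add hφ (isSOS_neg hψ)
  exact isSOS_congr (fun x => by ring) this

lemma isSOS_one {n : ℕ} : IsSumOfSigns (fun _ : Fin n → ℝ => (1 : ℤ)) := by
  rw [isSumOfSigns_iff_list]
  exact ⟨[1], fun x => by simp [sgnSum, sgn_one]⟩

lemma isSOS_const {n : ℕ} (c : ℤ) : IsSumOfSigns (fun _ : Fin n → ℝ => c) := by
  induction c using Int.induction_on with
  | zero => exact isSOS_zero
  | succ i ih => exact isSOS_add ih isSOS_one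
  | pred i ih => exact isSOS_sub ih isSOS_one

lemma sgnSum_mul_left {n : ℕ} (g : MvPolynomial (Fin n) ℝ)
    (l : List (MvPolynomial (Fin n) ℝ)) (x : Fin n → ℝ) :
    sgnSum (l.map (fun h => g * h)) x = sgn (eval x g) * sgnSum l x := by
  induction l with
  | nil => simp [sgnSum]
  | cons a t ih =>
      simp only [List.map_cons, sgnSum, List.sum_cons, List.map_map] at *
      rw [ih, map_mul, sgn_mul]
      ring

lemma sgnSum_flatMap_mul {n : ℕ} (l l' : List (MvPolynomial (Fin n) ℝ)) (x : Fin n → ℝ) :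
    sgnSum (l.flatMap (fun g => l'.map (fun h => g * h))) x = sgnSum l x * sgnSum l' x := by
  induction l with
  | nil => simp [sgnSum]
  | cons a t ih =>
      rw [List.flatMap_cons, sgnSum_append, sgnSum_mul_left, ih]
      simp only [sgnSum, List.map_cons, List.sum_cons]
      ring

lemma isSOS_mul {n : ℕ} {φ ψ : (Fin n → ℝ) → ℤ} (hφ : IsSumOfSigns φ)
    (hψ : IsSumOfSigns ψ) : IsSumOfSigns (fun x => φ x * ψ x) := by
  rw [isSumOfSigns_iff_list] at *
  obtain ⟨l, hl⟩ := hφ; obtain ⟨l', hl'⟩ := hψ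
  exact ⟨l.flatMap (fun g => l'.map (fun h => g * h)),
    fun x => by rw [hl, hl', sgnSum_flatMap_mul]⟩

lemma isSOS_sum {n : ℕ} {ι : Type*} (S : Finset ι) (f : ι → (Fin n → ℝ) → ℤ)
    (hf : ∀ i ∈ S, IsSumOfSigns (f i)) :
    IsSumOfSigns (fun x => ∑ i ∈ S, f i x) := by
  classical
  induction S using Finset.induction_on with
  | empty => exact isSOS_congr (by simp) isSOS_zero
  | @insert a s hnot ih =>
      exact isSOS_congr (fun x => Finset.sum_insert hnot)
        (isSOS_add (hf a (Finset.mem_insert_self a s))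
          (ih fun i hi => hf i (Finset.mem_insert_of_mem hi)))

lemma isSOS_prod {n : ℕ} {ι : Type*} (S : Finset ι) (f : ι → (Fin n → ℝ) → ℤ)
    (hf : ∀ i ∈ S, IsSumOfSigns (f i)) :
    IsSumOfSigns (fun x => ∏ i ∈ S, f i x) := by
  classical
  induction S using Finset.induction_on with
  | empty => exact isSOS_congr (by simp) isSOS_one
  | @insert a s hnot ih =>
      exact isSOS_congr (fun x => Finset.prod_insert hnot)
        (isSOS_mul (hf a (Finset.mem_insert_self a s))
          (ih fun i hi => hf i (Finset.mem_insert_of_mem hi)))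

end SOS

section OneVar
open Polynomial

lemma sgn_eq_of_close {a b : ℝ} (h : |b - a| < |a|) : sgn b = sgn a := by
  obtain ⟨h1, h2⟩ := abs_lt.1 h
  rcases lt_trichotomy a 0 with ha|ha|ha
  · rw [abs_of_neg ha] at h2
    rw [sgn_of_neg ha, sgn_of_neg (by linarith)]
  · subst ha
    rw [sub_zero, abs_zero] at h
    exact absurd h (not_lt.2 (abs_nonneg _))
  · rw [abs_of_pos ha] at h1
    rw [sgn_of_pos ha, sgn_of_pos (by linarith)]

lemma trailingCoeff_def (p : Polynomial ℝ) : p.trailingCoeff = p.coeff p.natTrailingDegree := rfl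

lemma sgn_eval_near_zero (p : Polynomial ℝ) :
    ∃ t₀ > (0:ℝ), ∀ t, 0 < t → t < t₀ → sgn (p.eval t) = sgn p.trailingCoeff := by
  rcases eq_or_ne p 0 with rfl | hp
  · exact ⟨1, one_pos, fun t _ _ => by simp [sgn_zero]⟩
  set m := p.natTrailingDegree with hm
  obtain ⟨q, hq⟩ : X ^ m ∣ p :=
    Polynomial.X_pow_dvd_iff.2 fun d hd => coeff_eq_zero_of_lt_natTrailingDegree hd
  have hq0 : q.eval 0 = p.trailingCoeff := by
    rw [← coeff_zero_eq_eval_zero, trailingCoeff_def, ← hm, hq]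
    simpa using (coeff_X_pow_mul q m 0).symm
  have ha : p.trailingCoeff ≠ 0 := trailingCoeff_nonzero_iff_nonzero.2 hp
  have hc : ContinuousAt (fun t : ℝ => q.eval t) 0 := q.continuousAt
  rw [Metric.continuousAt_iff] at hc
  obtain ⟨δ, hδ, hδ'⟩ := hc |p.trailingCoeff| (abs_pos.2 ha)
  refine ⟨δ, hδ, fun t ht htδ => ?_⟩
  have hqt : sgn (q.eval t) = sgn p.trailingCoeff := by
    apply sgn_eq_of_close
    have := hδ' (x := t) (by simpa [Real.dist_eq, abs_of_pos ht] using htδ)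
    rw [Real.dist_eq, hq0] at this
    exact this
  have : p.eval t = t ^ m * q.eval t := by rw [hq]; simp
  rw [this, sgn_pos_mul (pow_pos ht _), hqt]

lemma coeff_comp_neg_X (p : Polynomial ℝ) (n : ℕ) :
    (p.comp (-X)).coeff n = (-1 : ℝ)^n * p.coeff n := by
  induction p using Polynomial.induction_on' with
  | add p q hp hq => simp only [add_comp, coeff_add, hp, hq]; ring
  | monomial j a =>
      have : (monomial j a).comp (-X) = C a * (C ((-1:ℝ)^j) * X ^ j) := by
        rw [← C_mul_X_pow_eq_monomial, mul_comp, C_comp, pow_comp, X_comp,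
          show (-X : ℝ[X]) = C (-1) * X by simp, mul_pow, ← C_pow]
      rcases eq_or_ne n j with rfl|h
      · rw [this, coeff_C_mul, coeff_C_mul, coeff_X_pow, coeff_monomial]
        simp [mul_comm]
      · rw [this, coeff_C_mul, coeff_C_mul, coeff_X_pow, coeff_monomial]
        simp [h, Ne.symm h]

lemma comp_neg_X_ne_zero {p : Polynomial ℝ} (hp : p ≠ 0) : p.comp (-X) ≠ 0 := by
  intro h
  apply hp
  ext n
  have := congrArg (fun q : Polynomial ℝ => q.coeff n) h
  simp only [coeff_comp_neg_X, coeff_zero] at this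
  have hne : ((-1:ℝ)^n) ≠ 0 := by positivity
  simpa [coeff_zero] using (mul_eq_zero.1 this).resolve_left hne

lemma natTrailingDegree_comp_neg_X (p : Polynomial ℝ) :
    (p.comp (-X)).natTrailingDegree = p.natTrailingDegree := by
  rcases eq_or_ne p 0 with rfl|hp
  · simp
  have h1 : (p.comp (-X)).coeff p.natTrailingDegree ≠ 0 := by
    rw [coeff_comp_neg_X]
    exact mul_ne_zero (by positivity) (trailingCoeff_nonzero_iff_nonzero.2 hp)
  have h2 : p.coeff (p.comp (-X)).natTrailingDegree ≠ 0 := by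
    have := trailingCoeff_nonzero_iff_nonzero.2 (comp_neg_X_ne_zero hp)
    rw [trailingCoeff_def, coeff_comp_neg_X] at this
    intro h
    exact this (by rw [h, mul_zero])
  exact le_antisymm (natTrailingDegree_le_of_ne_zero h1)
    (natTrailingDegree_le_of_ne_zero h2)

lemma trailingCoeff_comp_neg_X (p : Polynomial ℝ) :
    (p.comp (-X)).trailingCoeff = (-1:ℝ)^p.natTrailingDegree * p.trailingCoeff := by
  rw [trailingCoeff_def, natTrailingDegree_comp_neg_X, coeff_comp_neg_X, trailingCoeff_def]

lemma sgn_eval_pair (p : Polynomial ℝ) :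
    ∃ t₀ > (0:ℝ), ∀ t, 0 < t → t < t₀ →
      sgn (p.eval t) + sgn (p.eval (-t)) =
        2 * ((if Even p.natTrailingDegree then 1 else 0) * sgn p.trailingCoeff) := by
  obtain ⟨t₁, h1, H1⟩ := sgn_eval_near_zero p
  obtain ⟨t₂, h2, H2⟩ := sgn_eval_near_zero (p.comp (-X))
  refine ⟨min t₁ t₂, lt_min h1 h2, fun t ht htm => ?_⟩
  have e1 := H1 t ht (lt_of_lt_of_le htm (min_le_left _ _))
  have e2 := H2 t ht (lt_of_lt_of_le htm (min_le_right _ _))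
  have he : (p.comp (-X)).eval t = p.eval (-t) := by simp [eval_comp]
  rw [← he, e2, e1, trailingCoeff_comp_neg_X]
  rcases Nat.even_or_odd p.natTrailingDegree with hev|hod
  · rw [if_pos hev, hev.neg_one_pow, one_mul]
    ring
  · rw [if_neg (Nat.not_even_iff_odd.2 hod), hod.neg_one_pow]
    rw [show (-1:ℝ) * p.trailingCoeff = -(p.trailingCoeff) by ring, sgn_neg]
    ring

lemma trailing_sum_formula (p : Polynomial ℝ) (d : ℕ) (hd : p.natDegree ≤ d) :
    ∑ j ∈ Finset.range (d+1), (if Even j then 1 else 0) * sgn (p.coeff j) *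
        ∏ l ∈ Finset.range j, (1 - sgn ((p.coeff l)^2)) =
      (if Even p.natTrailingDegree then 1 else 0) * sgn p.trailingCoeff := by
  rcases eq_or_ne p 0 with rfl|hp
  · simp [sgn_zero]
  have hm : p.natTrailingDegree ∈ Finset.range (d+1) := by
    rw [Finset.mem_range]
    have := p.natTrailingDegree_le_natDegree
    omega
  rw [Finset.sum_eq_single_of_mem p.natTrailingDegree hm]
  · have hprod : ∏ l ∈ Finset.range p.natTrailingDegree, (1 - sgn ((p.coeff l)^2)) = 1 := by
      apply Finset.prod_eq_one
      intro l hl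
      rw [coeff_eq_zero_of_lt_natTrailingDegree (Finset.mem_range.1 hl)]
      norm_num [sgn_zero]
    rw [hprod, mul_one, trailingCoeff_def]
  · intro j hj hjm
    rcases lt_or_gt_of_ne hjm with h|h
    · rw [coeff_eq_zero_of_lt_natTrailingDegree h, sgn_zero]
      ring
    · have hzero : ∏ l ∈ Finset.range j, (1 - sgn ((p.coeff l)^2)) = 0 := by
        apply Finset.prod_eq_zero (Finset.mem_range.2 h)
        rw [sgn_sq, if_neg (show p.coeff p.natTrailingDegree ≠ 0 from
          trailingCoeff_nonzero_iff_nonzero.2 hp)]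
        ring
      rw [hzero, mul_zero]

end OneVar

section Main
open MvPolynomial

lemma exists_uniform {ι : Type*} [Fintype ι] (P : ι → ℝ → Prop)
    (h : ∀ i, ∃ t₀ > (0:ℝ), ∀ t, 0 < t → t < t₀ → P i t) :
    ∃ t₀ > (0:ℝ), ∀ t, 0 < t → t < t₀ → ∀ i, P i t := by
  classical
  choose f hf hf' using h
  rcases isEmpty_or_nonempty ι with hι|hι
  · exact ⟨1, one_pos, fun t _ _ i => (hι.false i).elim⟩
  · refine ⟨Finset.univ.inf' Finset.univ_nonempty f, ?_, ?_⟩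
    · rw [gt_iff_lt, Finset.lt_inf'_iff]
      exact fun i _ => hf i
    · intro t ht htm i
      exact hf' i t ht (lt_of_lt_of_le htm (Finset.inf'_le _ (Finset.mem_univ i)))

lemma quadrant_backward (k : ℕ) (m : ℤ) :
    IsSumOfSigns (fun x : Fin k → ℝ => if ∀ i, 0 ≤ x i then 2^k * m else 0) := by
  have hfac : ∀ i : Fin k, IsSumOfSigns (fun x : Fin k → ℝ => if 0 ≤ x i then 2 else 0) := by
    intro i
    have hval : ∀ x : Fin k → ℝ, (if 0 ≤ x i then (2:ℤ) else 0) =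
        (1 + sgn (eval x (X i))) + (1 - sgn (eval x (X i ^ 2))) := by
      intro x
      rw [map_pow, eval_X, sgn_sq]
      rcases lt_trichotomy (x i) 0 with h|h|h
      · rw [if_neg (not_le.2 h), sgn_of_neg h, if_neg h.ne]
        ring
      · rw [h, if_pos le_rfl, sgn_zero, if_pos rfl]
        ring
      · rw [if_pos h.le, sgn_of_pos h, if_neg h.ne']
        ring
    exact isSOS_congr hval (isSOS_add (isSOS_add isSOS_one (isSOS_sgn _))
      (isSOS_sub isSOS_one (isSOS_sgn _)))
  have hprod : ∀ x : Fin k → ℝ, (if ∀ i, 0 ≤ x i then (2:ℤ)^k * m else 0) =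
      m * ∏ i : Fin k, (if 0 ≤ x i then (2:ℤ) else 0) := by
    intro x
    split_ifs with h
    · rw [Finset.prod_congr rfl (fun i _ => if_pos (h i)), Finset.prod_const]
      simp [Finset.card_univ]
      ring
    · push_neg at h
      obtain ⟨i, hi⟩ := h
      have hz : (∏ i : Fin k, if 0 ≤ x i then (2:ℤ) else 0) = 0 :=
        Finset.prod_eq_zero (Finset.mem_univ i) (if_neg (not_le.2 hi))
      rw [hz, mul_zero]
  exact isSOS_congr hprod (isSOS_mul (isSOS_const m) (isSOS_prod _ _ fun i _ => hfac i))

lemma quadrant_forward : ∀ k (n : ℤ),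
    IsSumOfSigns (fun x : Fin k → ℝ => if ∀ i, 0 ≤ x i then n else 0) → (2:ℤ)^k ∣ n := by
  intro k
  induction k with
  | zero => exact fun n _ => by simpa using one_dvd n
  | succ k ih =>
    intro n hφ
    obtain ⟨s, g, hg⟩ := hφ
    set G : Fin s → Polynomial (MvPolynomial (Fin k) ℝ) :=
      fun i => MvPolynomial.finSuccEquiv ℝ k (g i) with hG
    set d : ℕ := Finset.univ.sup fun i => (G i).natDegree with hdd
    set F : (Fin k → ℝ) → ℤ := fun x' => ∑ i : Fin s, ∑ j ∈ Finset.range (d+1),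
      (if Even j then 1 else 0) * sgn (eval x' ((G i).coeff j)) *
        ∏ l ∈ Finset.range j, (1 - sgn (eval x' (((G i).coeff l)^2))) with hFdef
    have hSOS : IsSumOfSigns F := by
      rw [hFdef]
      apply isSOS_sum
      intro i _
      apply isSOS_sum
      intro j _
      exact isSOS_mul (isSOS_mul (isSOS_const _) (isSOS_sgn _))
        (isSOS_prod _ _ fun l _ => isSOS_sub isSOS_one (isSOS_sgn _))
    have hval : ∀ x' : Fin k → ℝ, 2 * F x' = (if ∀ i, 0 ≤ x' i then n else 0) := by
      intro x'
      set p : Fin s → Polynomial ℝ := fun i => (G i).map (eval x') with hp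
      have hkey : ∀ y : ℝ,
          (if ∀ i : Fin (k+1), 0 ≤ (Fin.cons y x' : Fin (k+1) → ℝ) i then n else 0) =
            ∑ i : Fin s, sgn ((p i).eval y) := by
        intro y
        have h1 := hg (Fin.cons y x')
        exact h1.trans (Finset.sum_congr rfl fun i _ =>
          congrArg sgn (MvPolynomial.eval_eq_eval_mv_eval' x' y (g i)))
      have hFx : F x' = ∑ i : Fin s,
          (if Even (p i).natTrailingDegree then 1 else 0) * sgn ((p i).trailingCoeff) := by
        simp only [hFdef]
        refine Finset.sum_congr rfl fun i _ => ?_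
        have hdeg : (p i).natDegree ≤ d := by
          rw [hdd]
          exact le_trans Polynomial.natDegree_map_le
            (Finset.le_sup (f := fun i => (G i).natDegree) (Finset.mem_univ i))
        rw [← trailing_sum_formula (p i) d hdeg]
        refine Finset.sum_congr rfl fun j _ => ?_
        simp only [hp, Polynomial.coeff_map, map_pow]
      obtain ⟨t₀, ht₀, hT⟩ := exists_uniform
        (fun i t => sgn ((p i).eval t) + sgn ((p i).eval (-t)) =
          2 * ((if Even (p i).natTrailingDegree then 1 else 0) * sgn (p i).trailingCoeff))
        (fun i => sgn_eval_pair (p i))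
      have ht : 0 < t₀/2 := by linarith
      have ht2 : t₀/2 < t₀ := by linarith
      have hpos := hkey (t₀/2)
      have hneg := hkey (-(t₀/2))
      have hcondpos : (∀ i : Fin (k+1), 0 ≤ (Fin.cons (t₀/2) x' : Fin (k+1) → ℝ) i) ↔
          (∀ i : Fin k, 0 ≤ x' i) := by
        rw [Fin.forall_fin_succ]
        simp [Fin.cons_zero, Fin.cons_succ, ht.le]
      have hcondneg : ¬(∀ i : Fin (k+1), 0 ≤ (Fin.cons (-(t₀/2)) x' : Fin (k+1) → ℝ) i) := by
        intro h
        have h0 := h 0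
        rw [Fin.cons_zero] at h0
        linarith
      rw [if_neg hcondneg] at hneg
      have hsum : (if ∀ i : Fin k, 0 ≤ x' i then n else 0) =
          ∑ i : Fin s, (sgn ((p i).eval (t₀/2)) + sgn ((p i).eval (-(t₀/2)))) := by
        calc (if ∀ i : Fin k, 0 ≤ x' i then n else 0)
            = (if ∀ i : Fin (k+1), 0 ≤ (Fin.cons (t₀/2) x' : Fin (k+1) → ℝ) i then n else 0)
              + 0 := by rw [if_congr hcondpos rfl rfl, add_zero]
          _ = (∑ i : Fin s, sgn ((p i).eval (t₀/2)))
              + ∑ i : Fin s, sgn ((p i).eval (-(t₀/2))) := by rw [hpos, hneg]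
          _ = ∑ i : Fin s, (sgn ((p i).eval (t₀/2)) + sgn ((p i).eval (-(t₀/2)))) :=
              Finset.sum_add_distrib.symm
      calc 2 * F x'
          = ∑ i : Fin s, 2 * ((if Even (p i).natTrailingDegree then 1 else 0)
              * sgn ((p i).trailingCoeff)) := by rw [hFx, Finset.mul_sum]
        _ = ∑ i : Fin s, (sgn ((p i).eval (t₀/2)) + sgn ((p i).eval (-(t₀/2)))) :=
            (Finset.sum_congr rfl fun i _ => (hT (t₀/2) ht ht2 i).symm)
        _ = (if ∀ i : Fin k, 0 ≤ x' i then n else 0) := hsum.symm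
    have h2 : (2:ℤ) ∣ n := by
      have h0 := hval (fun _ => 0)
      rw [if_pos (fun i => le_refl (0:ℝ))] at h0
      exact ⟨F (fun _ => 0), h0.symm⟩
    obtain ⟨n', rfl⟩ := h2
    have hF' : ∀ x', (if ∀ i : Fin k, 0 ≤ x' i then n' else 0) = F x' := by
      intro x'
      have hv := hval x'
      split_ifs at hv ⊢ with h
      · omega
      · omega
    have hdvd := ih n' (isSOS_congr hF' hSOS)
    rw [pow_succ, mul_comm ((2:ℤ)^k) 2]
    exact mul_dvd_mul_left 2 hdvd

end Main

theorem sumOfSigns_closed_quadrant_iff (k : ℕ) (n : ℤ) :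
    IsSumOfSigns (fun x : Fin k → ℝ => if ∀ i, 0 ≤ x i then n else 0) ↔
      (2 : ℤ) ^ k ∣ n := by
  constructor
  · exact quadrant_forward k n
  · rintro ⟨m, rfl⟩
    exact quadrant_backward k m
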